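/- For every a₀ > 0, every c > 0, every G̃ > 0 and every integer M ≥ 2 there exist ε₀ ∈ (0,1) and D > 0 such that the following holds. Let Ĵ : ℤ → ℂ satisfy |Ĵ(q)| ≥ c for all q ∉ {1, −1}, for each 2 ≤ n ≤ M let g_n : ℤ^n → ℂ satisfy |g_n| ≤ G̃ everywhere, and let P : ℤ → ℂ satisfy P(−q) = conj(P(q)) for all q ∈ ℤ, |P(q)| ≤ a₀/q² for all q ≠ 0, sup_{q∈ℤ} |P(q)| = |P(1)| =: ε ≤ ε₀, and the harmonic-balance equation Ĵ(q)·P(q) = Σ_{n=2}^{M} S(g_n,n,P)(q) for all q ∉ {1, −1}. Then |P(q)| ≤ D·ε³ for every q ∈ ℤ with |q| ≥ 3. -/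

import Mathlib

/-- For `q : ℤ` and `k = (k₁, …, k_m) : Fin m → ℤ`, `diffs q k i` is the `i`-th successive
difference in the chain `q, k₁, k₂, …, k_m, 0`; i.e. `diffs q k 0 = q - k₁`,
`diffs q k i = kᵢ - k_{i+1}` for `1 ≤ i ≤ m - 1`, and `diffs q k m = k_m`. -/
def diffs (q : ℤ) {m : ℕ} (k : Fin m → ℤ) (i : ℕ) : ℤ :=
  (q :: (List.ofFn k ++ [0])).getD i 0 - (q :: (List.ofFn k ++ [0])).getD (i + 1) 0

/-- `Sg n g P q = Σ_{k₁,…,k_{n-1} ∈ ℤ} g(q,k₁,…,k_{n-1}) · P(q-k₁)·P(k₁-k₂)⋯P(k_{n-1})`,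
the convolution-type multiple series with kernel `g`. -/
noncomputable def Sg (n : ℕ) (g : (Fin n → ℤ) → ℂ) (P : ℤ → ℂ) (q : ℤ) : ℂ :=
  ∑' k : Fin (n - 1) → ℤ,
    g (fun i : Fin n => (q :: List.ofFn k).getD (i : ℕ) 0) *
      ∏ i ∈ Finset.range n, P (diffs q k i)

open scoped ENNReal NNReal
open Finset

noncomputable def Um (m : ℤ → ℝ≥0∞) : ℕ → ℤ → ℝ≥0∞
  | 0, q => m q
  | (j+1), q => ∑' k : ℤ, m (q - k) * Um m j k

lemma diffs_zero_fin0 (q : ℤ) (k : Fin 0 → ℤ) : diffs q k 0 = q := by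
  unfold _root_.diffs; simp

lemma diffs_cons_zero (q k₀ : ℤ) {j : ℕ} (k : Fin j → ℤ) :
    diffs q (Fin.cons k₀ k) 0 = q - k₀ := by
  unfold _root_.diffs; simp [List.ofFn_succ]

lemma diffs_cons_succ (q k₀ : ℤ) {j : ℕ} (k : Fin j → ℤ) (i : ℕ) :
    diffs q (Fin.cons k₀ k) (i+1) = diffs k₀ k i := by
  unfold _root_.diffs; simp [List.ofFn_succ]

lemma tsum_prod_diffs (m : ℤ → ℝ≥0∞) :
    ∀ (j : ℕ) (q : ℤ),
      (∑' k : Fin j → ℤ, ∏ i ∈ range (j+1), m (diffs q k i)) = Um m j q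
  | 0, q => by
      rw [tsum_eq_single (fun _ => (0:ℤ)) (by intro k hk; exact absurd (Subsingleton.elim _ _) hk)]
      simp [Um, diffs_zero_fin0]
  | (j+1), q => by
      rw [← (Fin.consEquiv (fun _ : Fin (j+1) => ℤ)).tsum_eq, ENNReal.tsum_prod']
      have : ∀ (a : ℤ) (b : Fin j → ℤ),
          (∏ i ∈ range (j+1+1), m (diffs q ((Fin.consEquiv (fun _ : Fin (j+1) => ℤ)) (a, b)) i))
            = m (q - a) * ∏ i ∈ range (j+1), m (diffs a b i) := by
        intro a b
        have hc : ((Fin.consEquiv (fun _ : Fin (j+1) => ℤ)) (a, b)) = Fin.cons a b := rfl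
        rw [hc, Finset.prod_range_succ']
        simp only [diffs_cons_zero, diffs_cons_succ]
        ring
      simp only [this]
      have : ∀ a : ℤ, (∑' b : Fin j → ℤ, m (q - a) * ∏ i ∈ range (j+1), m (diffs a b i))
          = m (q - a) * Um m j a := by
        intro a
        rw [ENNReal.tsum_mul_left, tsum_prod_diffs m j a]
      simp only [this, Um]

lemma sg_bound (j : ℕ) (g : (Fin (j+2) → ℤ) → ℂ) (P : ℤ → ℂ) (q : ℤ) (Gb : ℝ≥0)
    (hg : ∀ v, ‖g v‖₊ ≤ Gb)
    (hfin : Um (fun d => (‖P d‖₊ : ℝ≥0∞)) (j+1) q ≠ ⊤) :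
    (‖Sg (j+2) g P q‖₊ : ℝ≥0∞) ≤ (Gb : ℝ≥0∞) * Um (fun d => (‖P d‖₊ : ℝ≥0∞)) (j+1) q := by
  set m : ℤ → ℝ≥0∞ := fun d => (‖P d‖₊ : ℝ≥0∞) with hm
  set F : (Fin (j+1) → ℤ) → ℂ := fun k =>
    g (fun i : Fin (j+2) => (q :: List.ofFn k).getD (i : ℕ) 0) *
      ∏ i ∈ Finset.range (j+2), P (diffs q k i) with hF
  have hSg : Sg (j+2) g P q = ∑' k : Fin (j+1) → ℤ, F k := rfl
  have hptw : ∀ k, (‖F k‖₊ : ℝ≥0∞) ≤ (Gb : ℝ≥0∞) * ∏ i ∈ range (j+2), m (diffs q k i) := by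
    intro k
    have : ‖F k‖₊ ≤ Gb * ∏ i ∈ range (j+2), ‖P (diffs q k i)‖₊ := by
      rw [hF]; simp only [nnnorm_mul, nnnorm_prod]
      exact mul_le_mul_left (hg _) _
    calc (‖F k‖₊ : ℝ≥0∞) ≤ ((Gb * ∏ i ∈ range (j+2), ‖P (diffs q k i)‖₊ : ℝ≥0) : ℝ≥0∞) := by
          exact_mod_cast this
      _ = (Gb : ℝ≥0∞) * ∏ i ∈ range (j+2), m (diffs q k i) := by
          push_cast [hm]; rfl
  have hmaj : (∑' k : Fin (j+1) → ℤ, (‖F k‖₊ : ℝ≥0∞)) ≤ (Gb : ℝ≥0∞) * Um m (j+1) q := by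
    calc (∑' k : Fin (j+1) → ℤ, (‖F k‖₊ : ℝ≥0∞))
        ≤ ∑' k : Fin (j+1) → ℤ, (Gb : ℝ≥0∞) * ∏ i ∈ range (j+2), m (diffs q k i) :=
          ENNReal.tsum_le_tsum hptw
      _ = (Gb : ℝ≥0∞) * ∑' k : Fin (j+1) → ℤ, ∏ i ∈ range (j+2), m (diffs q k i) :=
          ENNReal.tsum_mul_left
      _ = (Gb : ℝ≥0∞) * Um m (j+1) q := by rw [tsum_prod_diffs m (j+1) q]
  have hne : (∑' k : Fin (j+1) → ℤ, (‖F k‖₊ : ℝ≥0∞)) ≠ ⊤ :=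
    ne_top_of_le_ne_top (ENNReal.mul_ne_top ENNReal.coe_ne_top hfin) hmaj
  have hsum : Summable fun k => ‖F k‖₊ := ENNReal.tsum_coe_ne_top_iff_summable.1 hne
  have hsumF : Summable F := Summable.of_nnnorm hsum
  calc (‖Sg (j+2) g P q‖₊ : ℝ≥0∞) = (‖∑' k, F k‖₊ : ℝ≥0∞) := by rw [hSg]
    _ ≤ ((∑' k, ‖F k‖₊ : ℝ≥0) : ℝ≥0∞) := by exact_mod_cast nnnorm_tsum_le hsum
    _ = ∑' k, (‖F k‖₊ : ℝ≥0∞) := ENNReal.coe_tsum hsum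
    _ ≤ _ := hmaj

lemma claimB (m : ℤ → ℝ≥0∞) (E S : ℝ≥0∞)
    (hE : ∀ d, m d ≤ E)
    (hS : (∑' d : ℤ, (if 2 ≤ |d| then m d else 0)) ≤ S) (q : ℤ) :
    (∑' k : ℤ, m (q - k)) ≤ 3 * E + S := by
  have h1 : (∑' k : ℤ, m (q - k)) = ∑' d : ℤ, m d := by
    simpa using (Equiv.subLeft q).tsum_eq m
  rw [h1]
  have h2 : ∀ d : ℤ, m d = (if 2 ≤ |d| then 0 else m d) + (if 2 ≤ |d| then m d else 0) := by
    intro d; split_ifs <;> simp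
  calc (∑' d : ℤ, m d)
      = ∑' d : ℤ, ((if 2 ≤ |d| then 0 else m d) + (if 2 ≤ |d| then m d else 0)) := by
        exact tsum_congr h2
    _ = (∑' d : ℤ, (if 2 ≤ |d| then 0 else m d)) + ∑' d : ℤ, (if 2 ≤ |d| then m d else 0) :=
        ENNReal.tsum_add
    _ ≤ 3 * E + S := by
        gcongr
        have hz : ∀ d : ℤ, d ∉ Finset.Icc (-1 : ℤ) 1 → (if 2 ≤ |d| then 0 else m d) = 0 := by
          intro d hd
          simp only [Finset.mem_Icc] at hd
          have h1 := le_abs_self d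
          have h2 := neg_abs_le d
          rw [if_pos (by omega)]
        rw [tsum_eq_sum hz]
        calc (∑ d ∈ Finset.Icc (-1 : ℤ) 1, (if 2 ≤ |d| then 0 else m d))
            ≤ ∑ d ∈ Finset.Icc (-1 : ℤ) 1, E := by
              apply Finset.sum_le_sum
              intro d _; split_ifs; · simp
              · exact hE d
          _ = 3 * E := by
              rw [Finset.sum_const, Int.card_Icc]
              simp

lemma claimA (m : ℤ → ℝ≥0∞) (E B : ℝ≥0∞) (j : ℕ)
    (hE : ∀ d, m d ≤ E) (hB : ∀ d : ℤ, 2 ≤ |d| → m d ≤ B) (q : ℤ) :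
    (∑' k : ℤ, m (q - k) * (if |k| ≤ (j : ℤ) + 1 then E^(j+1) else 0))
      ≤ ((2*j+3 : ℕ) : ℝ≥0∞) * (E^(j+1) * ((if |q| ≤ (j : ℤ) + 2 then E else 0) + B)) := by
  have hz : ∀ k : ℤ, k ∉ Finset.Icc (-(j : ℤ) - 1) ((j : ℤ) + 1) →
      m (q - k) * (if |k| ≤ (j : ℤ) + 1 then E^(j+1) else 0) = 0 := by
    intro k hk
    simp only [Finset.mem_Icc] at hk
    have h1 := le_abs_self k
    have h2 := neg_abs_le k
    rw [if_neg (by omega)]; ring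
  rw [tsum_eq_sum hz]
  have hcard : (Finset.Icc (-(j : ℤ) - 1) ((j : ℤ) + 1)).card = 2*j+3 := by
    rw [Int.card_Icc]; omega
  calc (∑ k ∈ Finset.Icc (-(j : ℤ) - 1) ((j : ℤ) + 1),
          m (q - k) * (if |k| ≤ (j : ℤ) + 1 then E^(j+1) else 0))
      ≤ ∑ _k ∈ Finset.Icc (-(j : ℤ) - 1) ((j : ℤ) + 1),
          (((if |q| ≤ (j : ℤ) + 2 then E else 0) + B) * E^(j+1)) := by
        apply Finset.sum_le_sum
        intro k _
        by_cases h : |k| ≤ (j : ℤ) + 1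
        · rw [if_pos h]
          have hmk : m (q - k) ≤ (if |q| ≤ (j : ℤ) + 2 then E else 0) + B := by
            split_ifs with hq
            · exact le_add_right (hE _)
            · have habs := abs_sub_abs_le_abs_sub q k
              have : 2 ≤ |q - k| := by omega
              simpa using hB _ this
          exact mul_le_mul' hmk le_rfl
        · rw [if_neg h, mul_zero]
          exact zero_le
    _ = ((2*j+3 : ℕ) : ℝ≥0∞) * (E^(j+1) * ((if |q| ≤ (j : ℤ) + 2 then E else 0) + B)) := by
        rw [Finset.sum_const, hcard, nsmul_eq_mul]
        ring

lemma Um_bound (m : ℤ → ℝ≥0∞) (E B S : ℝ≥0∞)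
    (hE : ∀ d, m d ≤ E) (hB : ∀ d : ℤ, 2 ≤ |d| → m d ≤ B)
    (hS : (∑' d : ℤ, (if 2 ≤ |d| then m d else 0)) ≤ S)
    (hE1 : E ≤ 1) (hS1 : S ≤ 1) :
    ∀ (j : ℕ) (q : ℤ), Um m j q ≤ (((2*j+7)^j : ℕ) : ℝ≥0∞) *
      ((if |q| ≤ (j : ℤ) + 1 then E^(j+1) else 0) + B * (if j = 0 then 1 else E + S))
  | 0, q => by
      show m q ≤ _
      simp only [Nat.cast_zero, pow_zero, Nat.cast_one, one_mul, if_pos (rfl : (0:ℕ) = 0), if_true,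
        pow_one, mul_one, zero_add]
      by_cases h : |q| ≤ (1 : ℤ)
      · rw [if_pos h]
        exact le_add_right (hE q)
      · rw [if_neg h, zero_add]
        exact hB q (by omega)
  | (j+1), q => by
      have IH := Um_bound m E B S hE hB hS hE1 hS1 j
      set aj : ℝ≥0∞ := (((2*j+7)^j : ℕ) : ℝ≥0∞) with haj
      set cj : ℝ≥0∞ := (if j = 0 then 1 else E + S) with hcj
      have step1 : Um m (j+1) q ≤
          aj * (∑' k : ℤ, m (q - k) * (if |k| ≤ (j : ℤ) + 1 then E^(j+1) else 0))
            + (aj * (B * cj)) * (∑' k : ℤ, m (q - k)) := by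
        show (∑' k : ℤ, m (q - k) * Um m j k) ≤ _
        calc (∑' k : ℤ, m (q - k) * Um m j k)
            ≤ ∑' k : ℤ, (aj * (m (q - k) * (if |k| ≤ (j : ℤ) + 1 then E^(j+1) else 0))
                + (aj * (B * cj)) * m (q - k)) := by
              apply ENNReal.tsum_le_tsum
              intro k
              calc m (q - k) * Um m j k
                  ≤ m (q - k) * (aj * ((if |k| ≤ (j : ℤ) + 1 then E^(j+1) else 0) + B * cj)) :=
                    mul_le_mul_right (IH k) _
                _ = aj * (m (q - k) * (if |k| ≤ (j : ℤ) + 1 then E^(j+1) else 0))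
                    + (aj * (B * cj)) * m (q - k) := by ring
          _ = _ := by
              rw [ENNReal.tsum_add, ENNReal.tsum_mul_left, ENNReal.tsum_mul_left]
      have hA := claimA m E B j hE hB q
      have hBc := claimB m E S hE hS q
      have step2 : Um m (j+1) q ≤
          aj * (((2*j+3 : ℕ) : ℝ≥0∞) * (E^(j+1) * ((if |q| ≤ (j : ℤ) + 2 then E else 0) + B)))
            + (aj * (B * cj)) * (3 * E + S) := by
        refine le_trans step1 ?_
        gcongr
      refine le_trans step2 ?_
      -- now pure arithmetic
      have hEj : E^(j+1) ≤ E := by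
        calc E^(j+1) = E^j * E := by ring
          _ ≤ 1 * E := mul_le_mul_left (pow_le_one' hE1 j) E
          _ = E := one_mul E
      have h4 : 3 * E + S ≤ 4 := by
        calc 3 * E + S ≤ 3 * 1 + 1 := add_le_add (mul_le_mul_right hE1 3) hS1
          _ = 4 := by norm_num
      have hcS : cj * (3 * E + S) ≤ 4 * (E + S) := by
        rw [hcj]
        split_ifs
        · rw [one_mul]
          rw [show (4:ℝ≥0∞) * (E + S) = (3 * E + S) + (E + 3 * S) by ring]
          exact le_self_add
        · calc (E + S) * (3 * E + S) ≤ (E + S) * 4 := mul_le_mul_right h4 _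
            _ = 4 * (E + S) := mul_comm _ _
      -- target
      have hsplit : (if |q| ≤ (j:ℤ)+2 then E else 0) + B = (if |q| ≤ (j:ℤ)+2 then E else 0) + B := rfl
      have key : aj * (((2*j+3 : ℕ) : ℝ≥0∞) * (E^(j+1) * ((if |q| ≤ (j : ℤ) + 2 then E else 0) + B)))
            + (aj * (B * cj)) * (3 * E + S)
          ≤ (((2*(j+1)+7)^(j+1) : ℕ) : ℝ≥0∞) *
            ((if |q| ≤ ((j+1:ℕ):ℤ) + 1 then E^(j+1+1) else 0) + B * (if j+1 = 0 then 1 else E + S)) := by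
        rw [if_neg (Nat.succ_ne_zero j)]
        have hifq : ((j+1:ℕ):ℤ) + 1 = (j:ℤ) + 2 := by push_cast; ring
        rw [hifq]
        have e1 : E^(j+1) * (if |q| ≤ (j:ℤ)+2 then E else 0)
            = (if |q| ≤ (j:ℤ)+2 then E^(j+1+1) else 0) := by
          split_ifs
          · exact (pow_succ E (j+1)).symm
          · exact mul_zero _
        have lhs_eq : aj * (((2*j+3 : ℕ) : ℝ≥0∞) * (E^(j+1) * ((if |q| ≤ (j : ℤ) + 2 then E else 0) + B)))
              + (aj * (B * cj)) * (3 * E + S)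
            = (aj * ((2*j+3 : ℕ) : ℝ≥0∞)) * (if |q| ≤ (j:ℤ)+2 then E^(j+1+1) else 0)
              + ((aj * ((2*j+3 : ℕ) : ℝ≥0∞)) * (E^(j+1) * B) + aj * (B * (cj * (3*E+S)))) := by
          rw [← e1]; ring
        rw [lhs_eq]
        have c1 : aj * ((2*j+3 : ℕ) : ℝ≥0∞) ≤ (((2*(j+1)+7)^(j+1) : ℕ) : ℝ≥0∞) := by
          rw [haj, ← Nat.cast_mul]
          apply Nat.cast_le.2
          calc (2*j+7)^j * (2*j+3) ≤ (2*(j+1)+7)^j * (2*(j+1)+7) := by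
                apply Nat.mul_le_mul
                · exact Nat.pow_le_pow_left (by omega) j
                · omega
            _ = (2*(j+1)+7)^(j+1) := (pow_succ _ _).symm
        have c2 : (aj * ((2*j+3 : ℕ) : ℝ≥0∞)) * (E^(j+1) * B) + aj * (B * (cj * (3*E+S)))
            ≤ (((2*(j+1)+7)^(j+1) : ℕ) : ℝ≥0∞) * (B * (E + S)) := by
          have t2 : (aj * ((2*j+3 : ℕ) : ℝ≥0∞)) * (E^(j+1) * B)
              ≤ (aj * ((2*j+3 : ℕ) : ℝ≥0∞)) * (B * (E + S)) := by
            apply mul_le_mul_right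
            calc E^(j+1) * B ≤ E * B := mul_le_mul_left hEj B
              _ ≤ (E + S) * B := mul_le_mul_left (le_add_right le_rfl) B
              _ = B * (E + S) := mul_comm _ _
          have t3 : aj * (B * (cj * (3*E+S))) ≤ (aj * 4) * (B * (E + S)) := by
            calc aj * (B * (cj * (3*E+S))) ≤ aj * (B * (4 * (E + S))) := by
                  apply mul_le_mul_right
                  exact mul_le_mul_right hcS B
              _ = (aj * 4) * (B * (E + S)) := by ring
          calc (aj * ((2*j+3 : ℕ) : ℝ≥0∞)) * (E^(j+1) * B) + aj * (B * (cj * (3*E+S)))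
              ≤ (aj * ((2*j+3 : ℕ) : ℝ≥0∞)) * (B * (E + S)) + (aj * 4) * (B * (E + S)) :=
                add_le_add t2 t3
            _ = (aj * ((2*j+3+4 : ℕ) : ℝ≥0∞)) * (B * (E + S)) := by push_cast; ring
            _ ≤ (((2*(j+1)+7)^(j+1) : ℕ) : ℝ≥0∞) * (B * (E + S)) := by
                apply mul_le_mul_left
                rw [haj, ← Nat.cast_mul]
                apply Nat.cast_le.2
                calc (2*j+7)^j * (2*j+3+4) = (2*j+7)^(j+1) := by rw [pow_succ]
                  _ ≤ (2*(j+1)+7)^(j+1) := Nat.pow_le_pow_left (by omega) (j+1)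
        exact le_trans (add_le_add (mul_le_mul_left c1 _) c2) (le_of_eq (mul_add _ _ _).symm)
      exact key

lemma keyNN (a : ℕ) (ha : 1 ≤ a) :
    (((a:ℝ≥0∞)+1)^2)⁻¹ + ((a:ℝ≥0∞)+1)⁻¹ ≤ ((a:ℝ≥0∞))⁻¹ := by
  have h0 : ((a:ℝ≥0) : ℝ≥0∞) = (a : ℝ≥0∞) := by push_cast; rfl
  have ha0 : (a:ℝ≥0) ≠ 0 := by
    simp only [ne_eq, Nat.cast_eq_zero]; omega
  have ha1 : ((a:ℝ≥0)+1) ≠ 0 := by positivity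
  have ha2 : (((a:ℝ≥0)+1)^2) ≠ 0 := by positivity
  rw [← h0, ← ENNReal.coe_one, ← ENNReal.coe_add, ← ENNReal.coe_pow,
    ← ENNReal.coe_inv ha2, ← ENNReal.coe_inv ha1, ← ENNReal.coe_inv ha0, ← ENNReal.coe_add,
    ENNReal.coe_le_coe, ← NNReal.coe_le_coe]
  push_cast
  have hx : (0:ℝ) < (a:ℝ) := by positivity
  have hx1 : (0:ℝ) < (a:ℝ) + 1 := by positivity
  rw [inv_eq_one_div, inv_eq_one_div, inv_eq_one_div,
    div_add_div _ _ (by positivity) (by positivity), div_le_div_iff₀ (by positivity) hx]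
  nlinarith [sq_nonneg ((a:ℝ))]

lemma tailNat (N : ℕ) (hN : 1 ≤ N) :
    (∑' n : ℕ, (if N < n then ((n:ℝ≥0∞)^2)⁻¹ else 0)) ≤ ((N:ℝ≥0∞))⁻¹ := by
  set f : ℕ → ℝ≥0∞ := fun n => (if N < n then ((n:ℝ≥0∞)^2)⁻¹ else 0) with hf
  have claim : ∀ K : ℕ, (∑ n ∈ range (N+1+K), f n) + (((N+K : ℕ)):ℝ≥0∞)⁻¹ ≤ ((N:ℝ≥0∞))⁻¹ := by
    intro K
    induction K with
    | zero =>
        have h0 : (∑ n ∈ range (N+1+0), f n) = 0 := by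
          apply Finset.sum_eq_zero
          intro n hn
          simp only [Finset.mem_range] at hn
          rw [hf]; simp only []
          rw [if_neg (by omega)]
        rw [h0, zero_add]
        norm_num
    | succ K IH =>
        have hidx : N+1+(K+1) = (N+1+K)+1 := by omega
        rw [hidx, Finset.sum_range_succ]
        have hfv : f (N+1+K) = (((N+1+K : ℕ):ℝ≥0∞)^2)⁻¹ := by
          rw [hf]; simp only []
          rw [if_pos (by omega)]
        rw [hfv]
        have hcast : ((N+1+K : ℕ):ℝ≥0∞) = ((N+K : ℕ):ℝ≥0∞) + 1 := by push_cast; ring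
        have hcast2 : ((N+(K+1) : ℕ):ℝ≥0∞) = ((N+K : ℕ):ℝ≥0∞) + 1 := by push_cast; ring
        calc (∑ n ∈ range (N+1+K), f n) + (((N+1+K : ℕ):ℝ≥0∞)^2)⁻¹ + (((N+(K+1) : ℕ)):ℝ≥0∞)⁻¹
            = (∑ n ∈ range (N+1+K), f n)
              + (((((N+K : ℕ):ℝ≥0∞)+1)^2)⁻¹ + ((((N+K : ℕ):ℝ≥0∞))+1)⁻¹) := by
              rw [hcast, hcast2]; ring
          _ ≤ (∑ n ∈ range (N+1+K), f n) + (((N+K : ℕ)):ℝ≥0∞)⁻¹ :=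
              add_le_add_right (keyNN (N+K) (by omega)) _
          _ ≤ _ := IH
  rw [ENNReal.tsum_eq_iSup_sum]
  apply iSup_le
  intro s
  have hsub : s ⊆ range (N+1+(s.sup id + 1)) := by
    intro n hn
    simp only [Finset.mem_range]
    have := Finset.le_sup (f := id) hn
    simp only [id] at this
    omega
  calc (∑ n ∈ s, f n) ≤ ∑ n ∈ range (N+1+(s.sup id + 1)), f n :=
        Finset.sum_le_sum_of_subset hsub
    _ ≤ _ := le_trans le_self_add (claim (s.sup id + 1))

lemma int_tsum_split (f : ℕ → ℝ≥0∞) :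
    (∑' d : ℤ, f d.natAbs) ≤ 2 * ∑' n : ℕ, f n := by
  have h := (Summable.tsum_add_tsum_compl (s := {d : ℤ | 0 ≤ d})
    (f := fun d : ℤ => f d.natAbs) ENNReal.summable ENNReal.summable).symm
  rw [two_mul]
  refine le_trans (le_of_eq h) (add_le_add ?_ ?_)
  · have hinj : Function.Injective (fun x : {d : ℤ | 0 ≤ d} => (x : ℤ).natAbs) := by
      rintro ⟨x, hx⟩ ⟨y, hy⟩ hxy
      simp only [Set.mem_setOf_eq] at hx hy
      have h2 : x.natAbs = y.natAbs := hxy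
      simp only [Subtype.mk.injEq]
      omega
    exact ENNReal.tsum_comp_le_tsum_of_injective hinj f
  · have hinj : Function.Injective (fun x : ↥{d : ℤ | 0 ≤ d}ᶜ => (x : ℤ).natAbs) := by
      rintro ⟨x, hx⟩ ⟨y, hy⟩ hxy
      simp only [Set.mem_compl_iff, Set.mem_setOf_eq, not_le] at hx hy
      have h2 : x.natAbs = y.natAbs := hxy
      simp only [Subtype.mk.injEq]
      omega
    exact ENNReal.tsum_comp_le_tsum_of_injective hinj f

lemma S_bound (m : ℤ → ℝ≥0∞) (A B : ℝ≥0) (hBA : B ≤ A) (hA1 : 1 ≤ A)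
    (hmB : ∀ d : ℤ, 2 ≤ |d| → m d ≤ (B : ℝ≥0∞))
    (hmA : ∀ d : ℤ, 2 ≤ |d| → m d ≤ (A : ℝ≥0∞) * (((d.natAbs : ℝ≥0∞))^2)⁻¹) :
    (∑' d : ℤ, (if 2 ≤ |d| then m d else 0)) ≤ ((12 * NNReal.sqrt (A * B) : ℝ≥0) : ℝ≥0∞) := by
  rcases eq_or_ne B 0 with hB0 | hB0
  · have hzz : ∀ d : ℤ, (if 2 ≤ |d| then m d else 0) = 0 := by
      intro d; split_ifs with h
      · exact le_antisymm (by simpa [hB0] using hmB d h) (zero_le)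
      · rfl
    rw [tsum_congr hzz]
    simp
  set s : ℝ≥0 := NNReal.sqrt (A / B) with hs
  have hs0 : s ≠ 0 := by
    rw [hs]
    simp only [ne_eq, NNReal.sqrt_eq_zero]
    intro hdiv
    rw [div_eq_zero_iff] at hdiv
    rcases hdiv with h | h
    · exact hB0 (le_antisymm (h ▸ hBA) (zero_le))
    · exact hB0 h
  have hs1 : 1 ≤ s := by
    rw [hs, ← NNReal.sqrt_one]
    rw [NNReal.sqrt_le_sqrt, le_div_iff₀ (pos_iff_ne_zero.2 hB0), one_mul]
    exact hBA
  set N : ℕ := ⌈(s : ℝ≥0)⌉₊ with hNdef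
  have hN1 : 1 ≤ N := Nat.one_le_ceil_iff.2 (lt_of_lt_of_le zero_lt_one hs1)
  have hN0 : (N : ℝ≥0) ≠ 0 := by
    simp only [ne_eq, Nat.cast_eq_zero]; omega
  have hNs : s ≤ (N : ℝ≥0) := Nat.le_ceil s
  have hNs2 : (N : ℝ≥0) ≤ 2 * s := by
    calc (N : ℝ≥0) ≤ s + 1 := le_of_lt (Nat.ceil_lt_add_one (zero_le (a := s)))
      _ ≤ s + s := add_le_add_right hs1 s
      _ = 2 * s := (two_mul s).symm
  have hsAB : NNReal.sqrt (A * B) * s = A := by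
    rw [hs, ← NNReal.sqrt_mul]
    have : A * B * (A / B) = A * A := by
      field_simp
    rw [this, NNReal.sqrt_mul_self]
  -- pointwise split
  have hpt : ∀ d : ℤ, (if 2 ≤ |d| then m d else 0) ≤
      (if 2 ≤ |d| ∧ |d| ≤ (N:ℤ) then (B : ℝ≥0∞) else 0)
        + (if (N:ℤ) < |d| then (A : ℝ≥0∞) * (((d.natAbs : ℝ≥0∞))^2)⁻¹ else 0) := by
    intro d
    by_cases h1 : 2 ≤ |d|
    · rw [if_pos h1]
      by_cases h2 : |d| ≤ (N:ℤ)
      · rw [if_pos ⟨h1, h2⟩]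
        exact le_trans (hmB d h1) le_self_add
      · rw [if_neg (fun hc => h2 hc.2), if_pos (by omega), zero_add]
        exact hmA d h1
    · rw [if_neg h1]
      exact zero_le
  refine le_trans (ENNReal.tsum_le_tsum hpt) ?_
  rw [ENNReal.tsum_add]
  have hpart1 : (∑' d : ℤ, (if 2 ≤ |d| ∧ |d| ≤ (N:ℤ) then (B : ℝ≥0∞) else 0))
      ≤ ((2*N+1 : ℕ) : ℝ≥0∞) * (B : ℝ≥0∞) := by
    have hz : ∀ d : ℤ, d ∉ Finset.Icc (-(N:ℤ)) (N:ℤ) →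
        (if 2 ≤ |d| ∧ |d| ≤ (N:ℤ) then (B : ℝ≥0∞) else 0) = 0 := by
      intro d hd
      simp only [Finset.mem_Icc] at hd
      have h1 := le_abs_self d
      have h2 := neg_abs_le d
      rw [if_neg (fun hc => hd ⟨by omega, by omega⟩)]
    rw [tsum_eq_sum hz]
    have hcard : (Finset.Icc (-(N:ℤ)) (N:ℤ)).card = 2*N+1 := by
      rw [Int.card_Icc]; omega
    calc (∑ d ∈ Finset.Icc (-(N:ℤ)) (N:ℤ), (if 2 ≤ |d| ∧ |d| ≤ (N:ℤ) then (B : ℝ≥0∞) else 0))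
        ≤ ∑ _d ∈ Finset.Icc (-(N:ℤ)) (N:ℤ), (B : ℝ≥0∞) := by
          apply Finset.sum_le_sum
          intro d _
          split_ifs
          · exact le_rfl
          · exact zero_le
      _ = ((2*N+1 : ℕ) : ℝ≥0∞) * (B : ℝ≥0∞) := by
          rw [Finset.sum_const, hcard, nsmul_eq_mul]
  have hpart2 : (∑' d : ℤ, (if (N:ℤ) < |d| then (A : ℝ≥0∞) * (((d.natAbs : ℝ≥0∞))^2)⁻¹ else 0))
      ≤ (A : ℝ≥0∞) * (2 * ((N:ℝ≥0∞))⁻¹) := by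
    set f : ℕ → ℝ≥0∞ := fun n => (if N < n then ((n:ℝ≥0∞)^2)⁻¹ else 0) with hf
    have heq : ∀ d : ℤ, (if (N:ℤ) < |d| then (A : ℝ≥0∞) * (((d.natAbs : ℝ≥0∞))^2)⁻¹ else 0)
        = (A : ℝ≥0∞) * f d.natAbs := by
      intro d
      rw [hf]
      have habs : ((N:ℤ) < |d|) ↔ (N < d.natAbs) := by
        rw [Int.abs_eq_natAbs]
        exact_mod_cast Iff.rfl
      simp only []
      split_ifs with h h' h'
      · rfl
      · exact absurd (habs.1 h) h'
      · exact absurd (habs.2 h') h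
      · rw [mul_zero]
    calc (∑' d : ℤ, (if (N:ℤ) < |d| then (A : ℝ≥0∞) * (((d.natAbs : ℝ≥0∞))^2)⁻¹ else 0))
        = ∑' d : ℤ, (A : ℝ≥0∞) * f d.natAbs := tsum_congr heq
      _ = (A : ℝ≥0∞) * ∑' d : ℤ, f d.natAbs := ENNReal.tsum_mul_left
      _ ≤ (A : ℝ≥0∞) * (2 * ∑' n : ℕ, f n) := mul_le_mul_right (int_tsum_split f) _
      _ ≤ (A : ℝ≥0∞) * (2 * ((N:ℝ≥0∞))⁻¹) := by
          apply mul_le_mul_right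
          exact mul_le_mul_right (tailNat N hN1) 2
  refine le_trans (add_le_add hpart1 hpart2) ?_
  -- cast to NNReal
  have hcast : ((2*N+1 : ℕ) : ℝ≥0∞) * (B : ℝ≥0∞) + (A : ℝ≥0∞) * (2 * ((N:ℝ≥0∞))⁻¹)
      = (((2*N+1 : ℕ) * B + A * (2 * (N:ℝ≥0)⁻¹) : ℝ≥0) : ℝ≥0∞) := by
    rw [ENNReal.coe_add, ENNReal.coe_mul, ENNReal.coe_mul, ENNReal.coe_mul,
      ENNReal.coe_inv hN0]
    push_cast
    ring
  rw [hcast, ENNReal.coe_le_coe]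
  -- final NNReal arithmetic
  have hsB : s * B = NNReal.sqrt (A * B) := by
    have hfs : A / B * (B * B) = A * B := by
      field_simp
    calc s * B = NNReal.sqrt (A/B) * NNReal.sqrt (B*B) := by rw [NNReal.sqrt_mul_self]
      _ = NNReal.sqrt (A/B*(B*B)) := (NNReal.sqrt_mul _ _).symm
      _ = NNReal.sqrt (A*B) := by rw [hfs]
  have h1 : ((2*N+1 : ℕ) : ℝ≥0) * B ≤ 5 * NNReal.sqrt (A * B) := by
    have hN5 : ((2*N+1 : ℕ) : ℝ≥0) ≤ 5 * s := by
      push_cast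
      calc 2 * (N:ℝ≥0) + 1 ≤ 2 * (2 * s) + s := add_le_add (mul_le_mul_right hNs2 2) hs1
        _ = 5 * s := by ring
    calc ((2*N+1 : ℕ) : ℝ≥0) * B ≤ (5 * s) * B := mul_le_mul_left hN5 B
      _ = 5 * (s * B) := by ring
      _ = 5 * NNReal.sqrt (A * B) := by rw [hsB]
  have h2 : A * (2 * (N:ℝ≥0)⁻¹) ≤ 2 * NNReal.sqrt (A * B) := by
    have heq2 : A * (2 * (N:ℝ≥0)⁻¹) = (2*A)/(N:ℝ≥0) := by
      rw [div_eq_mul_inv]; ring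
    rw [heq2, div_le_iff₀ (pos_iff_ne_zero.2 hN0)]
    calc 2*A = 2*(NNReal.sqrt (A*B) * s) := by rw [hsAB]
      _ ≤ 2*(NNReal.sqrt (A*B) * (N:ℝ≥0)) := mul_le_mul_right (mul_le_mul_right hNs _) 2
      _ = 2*NNReal.sqrt (A*B) * (N:ℝ≥0) := by ring
  calc ((2*N+1 : ℕ) : ℝ≥0) * B + A * (2 * (N:ℝ≥0)⁻¹)
      ≤ 5 * NNReal.sqrt (A * B) + 2 * NNReal.sqrt (A * B) := add_le_add h1 h2
    _ = 7 * NNReal.sqrt (A * B) := by ring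
    _ ≤ 12 * NNReal.sqrt (A * B) := by
        apply mul_le_mul_left
        norm_num

lemma master (c' Gb' : ℝ≥0) (hc' : c' ≠ 0) (M : ℕ) (hM : 2 ≤ M)
    (J : ℤ → ℂ) (hJ : ∀ q : ℤ, q ≠ 1 → q ≠ -1 → c' ≤ ‖J q‖₊)
    (g : (n : ℕ) → (Fin n → ℤ) → ℂ)
    (hg : ∀ n : ℕ, 2 ≤ n → n ≤ M → ∀ v : Fin n → ℤ, ‖g n v‖₊ ≤ Gb')
    (P : ℤ → ℂ)
    (heq : ∀ q : ℤ, q ≠ 1 → q ≠ -1 → J q * P q = ∑ n ∈ Finset.Icc 2 M, Sg n (g n) P q)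
    (E B S : ℝ≥0)
    (hE : ∀ d : ℤ, ‖P d‖₊ ≤ E)
    (hB : ∀ d : ℤ, 2 ≤ |d| → ‖P d‖₊ ≤ B)
    (hS : (∑' d : ℤ, (if 2 ≤ |d| then ((‖P d‖₊ : ℝ≥0∞)) else 0)) ≤ ((S : ℝ≥0) : ℝ≥0∞))
    (hE1 : E ≤ 1) (hS1 : S ≤ 1)
    (p : ℕ) (hp2 : 2 ≤ p) :
    ∀ q : ℤ, (p:ℤ) ≤ |q| →
      ‖P q‖₊ ≤ (Gb' * (M * (2*M+7)^M) * (E^p + B*(E+S))) / c' := by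
  intro q hq
  have habs1 := le_abs_self q
  have habs2 := neg_abs_le q
  have hq1 : q ≠ 1 := by intro h; subst h; simp at habs1 habs2 hq; omega
  have hqm1 : q ≠ -1 := by intro h; subst h; norm_num at hq; omega
  set m : ℤ → ℝ≥0∞ := fun d => ((‖P d‖₊ : ℝ≥0∞)) with hm
  have hEm : ∀ d, m d ≤ ((E : ℝ≥0) : ℝ≥0∞) := fun d => ENNReal.coe_le_coe.2 (hE d)
  have hBm : ∀ d : ℤ, 2 ≤ |d| → m d ≤ ((B : ℝ≥0) : ℝ≥0∞) :=
    fun d hd => ENNReal.coe_le_coe.2 (hB d hd)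
  have hE1' : ((E : ℝ≥0) : ℝ≥0∞) ≤ 1 := by exact_mod_cast hE1
  have hS1' : ((S : ℝ≥0) : ℝ≥0∞) ≤ 1 := by exact_mod_cast hS1
  have hUm := Um_bound m (E : ℝ≥0∞) (B : ℝ≥0∞) (S : ℝ≥0∞) hEm hBm hS hE1' hS1'
  set T1 : ℝ≥0∞ := (((2*M+7)^M : ℕ) : ℝ≥0∞) *
    ((E : ℝ≥0∞)^p + (B : ℝ≥0∞) * ((E : ℝ≥0∞) + (S : ℝ≥0∞))) with hT1
  have hn : ∀ n ∈ Finset.Icc 2 M, (‖Sg n (g n) P q‖₊ : ℝ≥0∞) ≤ (Gb' : ℝ≥0∞) * T1 := by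
    intro n hnmem
    rw [Finset.mem_Icc] at hnmem
    obtain ⟨j, rfl⟩ : ∃ j, n = j + 2 := ⟨n - 2, by omega⟩
    have hUb := hUm (j+1) q
    rw [if_neg (Nat.succ_ne_zero j)] at hUb
    have hRfin : ((((2*(j+1)+7)^(j+1) : ℕ)) : ℝ≥0∞) *
        ((if |q| ≤ ((j+1:ℕ):ℤ) + 1 then ((E : ℝ≥0∞))^(j+1+1) else 0)
          + (B : ℝ≥0∞) * ((E : ℝ≥0∞) + (S : ℝ≥0∞))) ≠ ⊤ := by
      apply ENNReal.mul_ne_top (ENNReal.natCast_ne_top _)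
      apply ENNReal.add_ne_top.2
      constructor
      · split_ifs
        · exact ENNReal.pow_ne_top ENNReal.coe_ne_top
        · exact ENNReal.zero_ne_top
      · exact ENNReal.mul_ne_top ENNReal.coe_ne_top
          (ENNReal.add_ne_top.2 ⟨ENNReal.coe_ne_top, ENNReal.coe_ne_top⟩)
    have hfin : Um m (j+1) q ≠ ⊤ := ne_top_of_le_ne_top hRfin hUb
    have hgb := hg (j+2) (by omega) (by omega)
    have hsg := sg_bound j (g (j+2)) P q Gb' hgb hfin
    refine le_trans hsg ?_
    rw [hT1, ← mul_assoc]
    have hcoef : ((((2*(j+1)+7)^(j+1) : ℕ)) : ℝ≥0∞) ≤ (((2*M+7)^M : ℕ) : ℝ≥0∞) := by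
      apply Nat.cast_le.2
      calc (2*(j+1)+7)^(j+1) ≤ (2*M+7)^(j+1) := Nat.pow_le_pow_left (by omega) (j+1)
        _ ≤ (2*M+7)^M := Nat.pow_le_pow_right (by omega) (by omega)
    have hind : (if |q| ≤ ((j+1:ℕ):ℤ) + 1 then ((E : ℝ≥0∞))^(j+1+1) else 0)
        ≤ (E : ℝ≥0∞)^p := by
      split_ifs with h
      · apply pow_le_pow_right_of_le_one' hE1'
        have h2 : ((j+1:ℕ):ℤ) + 1 = ((j+2 : ℕ) : ℤ) := by push_cast; ring
        rw [h2] at h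
        have hpj : (p:ℤ) ≤ ((j+2:ℕ):ℤ) := le_trans hq h
        have : p ≤ j + 2 := by exact_mod_cast hpj
        omega
      · exact zero_le
    calc (Gb' : ℝ≥0∞) * Um m (j+1) q
        ≤ (Gb' : ℝ≥0∞) * (((((2*(j+1)+7)^(j+1) : ℕ)) : ℝ≥0∞) *
            ((if |q| ≤ ((j+1:ℕ):ℤ) + 1 then ((E : ℝ≥0∞))^(j+1+1) else 0)
              + (B : ℝ≥0∞) * ((E : ℝ≥0∞) + (S : ℝ≥0∞)))) := mul_le_mul_right hUb _
      _ ≤ (Gb' : ℝ≥0∞) * ((((2*M+7)^M : ℕ) : ℝ≥0∞) *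
            ((E : ℝ≥0∞)^p + (B : ℝ≥0∞) * ((E : ℝ≥0∞) + (S : ℝ≥0∞)))) := by
          apply mul_le_mul_right
          exact mul_le_mul' hcoef (add_le_add hind le_rfl)
      _ = (Gb' : ℝ≥0∞) * (((2*M+7)^M : ℕ) : ℝ≥0∞) *
            ((E : ℝ≥0∞)^p + (B : ℝ≥0∞) * ((E : ℝ≥0∞) + (S : ℝ≥0∞))) := by rw [mul_assoc]
  set T : ℝ≥0 := Gb' * (M * (2*M+7)^M) * (E^p + B*(E+S)) with hT
  have hkey : (c' : ℝ≥0∞) * (‖P q‖₊ : ℝ≥0∞) ≤ (T : ℝ≥0∞) := by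
    calc (c' : ℝ≥0∞) * (‖P q‖₊ : ℝ≥0∞)
        ≤ (‖J q‖₊ : ℝ≥0∞) * (‖P q‖₊ : ℝ≥0∞) :=
          mul_le_mul_left (ENNReal.coe_le_coe.2 (hJ q hq1 hqm1)) _
      _ = (‖J q * P q‖₊ : ℝ≥0∞) := by rw [nnnorm_mul, ENNReal.coe_mul]
      _ = (‖∑ n ∈ Finset.Icc 2 M, Sg n (g n) P q‖₊ : ℝ≥0∞) := by rw [heq q hq1 hqm1]
      _ ≤ ∑ n ∈ Finset.Icc 2 M, (‖Sg n (g n) P q‖₊ : ℝ≥0∞) := by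
          rw [← ENNReal.coe_finset_sum]
          exact ENNReal.coe_le_coe.2 (nnnorm_sum_le _ _)
      _ ≤ ∑ _n ∈ Finset.Icc 2 M, (Gb' : ℝ≥0∞) * T1 := Finset.sum_le_sum hn
      _ = ((Finset.Icc 2 M).card : ℝ≥0∞) * ((Gb' : ℝ≥0∞) * T1) := by
          rw [Finset.sum_const, nsmul_eq_mul]
      _ ≤ (M : ℝ≥0∞) * ((Gb' : ℝ≥0∞) * T1) := by
          apply mul_le_mul_left
          apply Nat.cast_le.2
          rw [Nat.card_Icc]
          omega
      _ = (T : ℝ≥0∞) := by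
          rw [hT, hT1]
          push_cast
          ring
  have hkey' : c' * ‖P q‖₊ ≤ T := by exact_mod_cast hkey
  rw [le_div_iff₀ (pos_iff_ne_zero.2 hc')]
  rw [mul_comm]
  exact hkey'

theorem stmt12 (a₀ c Gb : ℝ) (ha₀ : 0 < a₀) (hc : 0 < c) (hGb : 0 < Gb)
    (M : ℕ) (hM : 2 ≤ M) :
    ∃ ε₀ ∈ Set.Ioo (0 : ℝ) 1, ∃ D : ℝ, 0 < D ∧
      ∀ J : ℤ → ℂ, (∀ q : ℤ, q ≠ 1 → q ≠ -1 → c ≤ ‖J q‖) →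
      ∀ g : (n : ℕ) → (Fin n → ℤ) → ℂ,
        (∀ n : ℕ, 2 ≤ n → n ≤ M → ∀ v : Fin n → ℤ, ‖g n v‖ ≤ Gb) →
      ∀ P : ℤ → ℂ,
        (∀ q : ℤ, P (-q) = starRingEnd ℂ (P q)) →
        (∀ q : ℤ, q ≠ 0 → ‖P q‖ ≤ a₀ / (q : ℝ) ^ 2) →
        (⨆ q : ℤ, ‖P q‖) = ‖P 1‖ →
        ‖P 1‖ ≤ ε₀ →
        (∀ q : ℤ, q ≠ 1 → q ≠ -1 → J q * P q = ∑ n ∈ Finset.Icc 2 M, Sg n (g n) P q) →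
        ∀ q : ℤ, 3 ≤ |q| → ‖P q‖ ≤ D * ‖P 1‖ ^ 3 := by
  set A : ℝ≥0 := a₀.toNNReal + 1 with hA
  have hA1 : 1 ≤ A := le_add_self
  have hA0 : A ≠ 0 := by positivity
  set c' : ℝ≥0 := c.toNNReal with hc'
  have hc'0 : c' ≠ 0 := by
    simp only [hc', ne_eq, Real.toNNReal_eq_zero, not_le]
    exact hc
  set G' : ℝ≥0 := Gb.toNNReal with hG'
  set K : ℝ≥0 := (G' * (M * (2*M+7)^M)) / c' with hK
  set K₁ : ℝ≥0 := K * (2 + 12 * NNReal.sqrt A) with hK₁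
  set K₂ : ℝ≥0 := K * (1 + K₁ + 12 * K₁ * NNReal.sqrt (A * K₁)) with hK₂
  set D' : ℝ≥0 := K * (1 + K₂ + 12 * K₂ * NNReal.sqrt (A * K₂)) with hD'
  set ε₀' : ℝ≥0 := 2⁻¹ ⊓ (144 * A)⁻¹ ⊓ ((K₁+1)^2)⁻¹ ⊓ (K₂+1)⁻¹ with hε₀'
  have hε₀'pos : 0 < ε₀' := by
    rw [hε₀']
    apply lt_min (lt_min (lt_min (by norm_num) ?_) ?_) ?_
    · rw [pos_iff_ne_zero]
      simp only [ne_eq, inv_eq_zero]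
      positivity
    · rw [pos_iff_ne_zero]
      simp only [ne_eq, inv_eq_zero]
      positivity
    · rw [pos_iff_ne_zero]
      simp only [ne_eq, inv_eq_zero]
      positivity
  have hε₀'half : ε₀' ≤ 2⁻¹ := le_trans (le_trans inf_le_left inf_le_left) inf_le_left
  have hε₀'A : ε₀' ≤ (144 * A)⁻¹ := le_trans (le_trans inf_le_left inf_le_left) inf_le_right
  have hε₀'K₁ : ε₀' ≤ ((K₁+1)^2)⁻¹ := le_trans inf_le_left inf_le_right
  have hε₀'K₂ : ε₀' ≤ (K₂+1)⁻¹ := inf_le_right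
  have hε₀'one : ε₀' ≤ 1 := le_trans hε₀'half (by norm_num)
  refine ⟨(ε₀' : ℝ), ⟨by exact_mod_cast hε₀'pos, ?_⟩, (D' : ℝ) + 1, by positivity, ?_⟩
  · calc (ε₀' : ℝ) ≤ ((2⁻¹ : ℝ≥0) : ℝ) := by exact_mod_cast hε₀'half
      _ < 1 := by norm_num
  intro J hJ g hg P _hconj hP hsup hPe heq q hq3
  -- nnnorm versions of the hypotheses
  have hJ' : ∀ q : ℤ, q ≠ 1 → q ≠ -1 → c' ≤ ‖J q‖₊ := by
    intro q h1 h2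
    rw [hc', ← norm_toNNReal]
    exact Real.toNNReal_mono (hJ q h1 h2)
  have hg' : ∀ n : ℕ, 2 ≤ n → n ≤ M → ∀ v : Fin n → ℤ, ‖g n v‖₊ ≤ G' := by
    intro n h1 h2 v
    rw [hG', ← norm_toNNReal]
    exact Real.toNNReal_mono (hg n h1 h2 v)
  set e : ℝ≥0 := ‖P 1‖₊ with he
  have hce : (e : ℝ) = ‖P 1‖ := rfl
  -- sup bound
  have hbdd : BddAbove (Set.range fun q : ℤ => ‖P q‖) := by
    refine ⟨max ‖P 0‖ a₀, ?_⟩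
    rintro x ⟨q, rfl⟩
    rcases eq_or_ne q 0 with rfl | hq0
    · exact le_max_left _ _
    · refine le_trans (hP q hq0) (le_trans ?_ (le_max_right _ _))
      apply div_le_self ha₀.le
      have h1 : 1 ≤ q.natAbs := by omega
      have h2 : ((1:ℕ):ℝ) ≤ ((q.natAbs : ℕ) : ℝ) := by exact_mod_cast h1
      have h3 : ((q.natAbs : ℕ) : ℝ)^2 = (q:ℝ)^2 := by
        have h4 : ((q.natAbs ^ 2 : ℕ) : ℝ) = ((q ^ 2 : ℤ) : ℝ) := by
          rw [← Int.cast_natCast]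
          exact congrArg _ (Int.natAbs_sq q)
        push_cast at h4
        exact h4
      calc (1:ℝ) = 1^2 := by norm_num
        _ ≤ ((q.natAbs : ℕ) : ℝ)^2 := by
            apply pow_le_pow_left₀ (by norm_num)
            simpa using h2
        _ = (q:ℝ)^2 := h3
  have hE : ∀ d : ℤ, ‖P d‖₊ ≤ e := by
    intro d
    have : ‖P d‖ ≤ ‖P 1‖ := hsup ▸ le_ciSup hbdd d
    rw [he, ← NNReal.coe_le_coe]
    simpa using this
  have heε₀ : e ≤ ε₀' := by
    rw [he, ← NNReal.coe_le_coe]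
    simpa using hPe
  have he1 : e ≤ 1 := le_trans heε₀ hε₀'one
  have hsqe1 : NNReal.sqrt e ≤ 1 := by
    rw [← NNReal.sqrt_one]
    exact NNReal.sqrt_le_sqrt.2 he1
  have hesqe : e ≤ NNReal.sqrt e := by
    have h1 : e * e ≤ e := by
      calc e * e ≤ 1 * e := mul_le_mul_left he1 e
        _ = e := one_mul e
    calc e = NNReal.sqrt (e * e) := (NNReal.sqrt_mul_self e).symm
      _ ≤ NNReal.sqrt e := NNReal.sqrt_le_sqrt.2 h1
  -- a priori decay in ℝ≥0
  have hPd : ∀ d : ℤ, 2 ≤ |d| → ‖P d‖₊ ≤ A / ((d.natAbs : ℝ≥0))^2 := by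
    intro d hd
    have hd0 : d ≠ 0 := by
      intro h; subst h; simp at hd
    have hnat : ((d.natAbs : ℕ) : ℝ)^2 = (d:ℝ)^2 := by
      have h4 : ((d.natAbs ^ 2 : ℕ) : ℝ) = ((d ^ 2 : ℤ) : ℝ) := by
        rw [← Int.cast_natCast]
        exact congrArg _ (Int.natAbs_sq d)
      push_cast at h4
      exact h4
    have hnat0 : ((d.natAbs : ℝ≥0))^2 ≠ 0 := by
      have : 1 ≤ d.natAbs := by omega
      positivity
    rw [← NNReal.coe_le_coe]
    have hrhs : ((A / ((d.natAbs : ℝ≥0))^2 : ℝ≥0) : ℝ) = (A : ℝ) / ((d.natAbs : ℕ) : ℝ)^2 := by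
      push_cast
      rfl
    rw [hrhs]
    calc (‖P d‖₊ : ℝ) = ‖P d‖ := rfl
      _ ≤ a₀ / (d:ℝ)^2 := hP d hd0
      _ ≤ (A : ℝ) / (d:ℝ)^2 := by
          have hdne : (d:ℝ) ≠ 0 := Int.cast_ne_zero.2 hd0
          have hd2 : (0:ℝ) < (d:ℝ)^2 := by positivity
          have hAa : a₀ ≤ (A : ℝ) := by
            rw [hA]; push_cast; rw [Real.coe_toNNReal a₀ ha₀.le]; linarith
          gcongr
      _ = (A : ℝ) / ((d.natAbs : ℕ) : ℝ)^2 := by rw [hnat]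
  -- one bootstrap round
  have roundlem : ∀ B : ℝ≥0, B ≤ e → (∀ d : ℤ, 2 ≤ |d| → ‖P d‖₊ ≤ B) →
      ∀ p : ℕ, 2 ≤ p → ∀ r : ℤ, (p:ℤ) ≤ |r| →
        ‖P r‖₊ ≤ K * (e^p + B*(e + 12 * NNReal.sqrt (A * B))) := by
    intro B hBe hBd p hp r hr
    have hBA : B ≤ A := le_trans hBe (le_trans heε₀ (le_trans hε₀'one hA1))
    have hmB : ∀ d : ℤ, 2 ≤ |d| → ((‖P d‖₊ : ℝ≥0∞)) ≤ (B : ℝ≥0∞) :=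
      fun d hd => ENNReal.coe_le_coe.2 (hBd d hd)
    have hmA : ∀ d : ℤ, 2 ≤ |d| →
        ((‖P d‖₊ : ℝ≥0∞)) ≤ (A : ℝ≥0∞) * (((d.natAbs : ℝ≥0∞))^2)⁻¹ := by
      intro d hd
      have h1 := hPd d hd
      have hn0 : ((d.natAbs : ℝ≥0)) ≠ 0 :=
        Nat.cast_ne_zero.2 (Int.natAbs_ne_zero.2 (by rintro rfl; simp at hd))
      calc ((‖P d‖₊ : ℝ≥0∞)) ≤ ((A / ((d.natAbs : ℝ≥0))^2 : ℝ≥0) : ℝ≥0∞) :=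
            ENNReal.coe_le_coe.2 h1
        _ = (A : ℝ≥0∞) * (((d.natAbs : ℝ≥0∞))^2)⁻¹ := by
            rw [ENNReal.coe_div (pow_ne_zero 2 hn0), div_eq_mul_inv, ENNReal.coe_pow]
            simp [ENNReal.coe_natCast]
    have hS := S_bound (fun d => ((‖P d‖₊ : ℝ≥0∞))) A B hBA hA1 hmB hmA
    have hsAB1 : 12 * NNReal.sqrt (A * B) ≤ 1 := by
      have h1 : A * B ≤ A * ε₀' := mul_le_mul_right (le_trans hBe heε₀) A
      have h2 : A * ε₀' ≤ 144⁻¹ := by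
        calc A * ε₀' ≤ A * (144 * A)⁻¹ := mul_le_mul_right hε₀'A A
          _ = 144⁻¹ * (A * A⁻¹) := by rw [mul_inv]; ring
          _ = 144⁻¹ := by rw [mul_inv_cancel₀ hA0, mul_one]
      calc 12 * NNReal.sqrt (A*B) ≤ 12 * NNReal.sqrt (144⁻¹ : ℝ≥0) :=
            mul_le_mul_right (NNReal.sqrt_le_sqrt.2 (le_trans h1 h2)) 12
        _ = 12 * (12⁻¹ : ℝ≥0) := by
            rw [show ((144⁻¹ : ℝ≥0)) = (12⁻¹ : ℝ≥0) * (12⁻¹ : ℝ≥0) by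
                rw [← mul_inv]; norm_num,
              NNReal.sqrt_mul_self]
        _ = 1 := mul_inv_cancel₀ (by norm_num)
    have hres := master c' G' hc'0 M hM J hJ' g hg' P heq e B (12 * NNReal.sqrt (A*B))
      hE hBd hS he1 hsAB1 p hp r hr
    have hKX : (G' * (M * (2*M+7)^M) * (e^p + B*(e + 12 * NNReal.sqrt (A * B)))) / c'
        = K * (e^p + B*(e + 12 * NNReal.sqrt (A * B))) := by
      rw [hK, div_eq_mul_inv, div_eq_mul_inv]; ring
    rwa [hKX] at hres
  -- Round 1
  have round1 : ∀ d : ℤ, 2 ≤ |d| → ‖P d‖₊ ≤ K₁ * (e * NNReal.sqrt e) := by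
    intro d hd
    have h := roundlem e le_rfl (fun d' _ => hE d') 2 le_rfl d (by exact_mod_cast hd)
    refine le_trans h ?_
    rw [hK₁, NNReal.sqrt_mul]
    calc K * (e^2 + e*(e + 12 * (NNReal.sqrt A * NNReal.sqrt e)))
        = K * ((e*e) + (e*e) + 12 * NNReal.sqrt A * (e * NNReal.sqrt e)) := by ring
      _ ≤ K * ((e*NNReal.sqrt e) + (e*NNReal.sqrt e)
            + 12 * NNReal.sqrt A * (e * NNReal.sqrt e)) := by
          gcongr K * (?_ + ?_ + _) <;> exact mul_le_mul_right hesqe e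
      _ = (K * (2 + 12 * NNReal.sqrt A)) * (e * NNReal.sqrt e) := by ring
  have hB1e : K₁ * (e * NNReal.sqrt e) ≤ e := by
    have hsqrte : NNReal.sqrt e ≤ (K₁+1)⁻¹ := by
      calc NNReal.sqrt e ≤ NNReal.sqrt ((((K₁+1)^2)⁻¹ : ℝ≥0)) :=
            NNReal.sqrt_le_sqrt.2 (le_trans heε₀ hε₀'K₁)
        _ = (K₁+1)⁻¹ := by
            rw [show ((((K₁+1)^2)⁻¹ : ℝ≥0)) = (K₁+1)⁻¹ * (K₁+1)⁻¹ by rw [pow_two, mul_inv],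
              NNReal.sqrt_mul_self]
    calc K₁ * (e * NNReal.sqrt e) = (K₁ * NNReal.sqrt e) * e := by ring
      _ ≤ ((K₁+1) * (K₁+1)⁻¹) * e :=
          mul_le_mul_left (mul_le_mul' (le_add_right le_rfl) hsqrte) e
      _ = 1 * e := by rw [mul_inv_cancel₀ (by positivity)]
      _ = e := one_mul e
  -- Round 2
  have hsqe_mul : NNReal.sqrt (e * NNReal.sqrt e) ≤ NNReal.sqrt e := by
    apply NNReal.sqrt_le_sqrt.2
    calc e * NNReal.sqrt e ≤ e * 1 := mul_le_mul_right hsqe1 e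
      _ = e := mul_one e
  have round2 : ∀ d : ℤ, 2 ≤ |d| → ‖P d‖₊ ≤ K₂ * e^2 := by
    intro d hd
    have h := roundlem (K₁ * (e * NNReal.sqrt e)) hB1e round1 2 le_rfl d (by exact_mod_cast hd)
    refine le_trans h ?_
    rw [hK₂]
    calc K * (e^2 + (K₁ * (e * NNReal.sqrt e))
            * (e + 12 * NNReal.sqrt (A * (K₁ * (e * NNReal.sqrt e)))))
        ≤ K * (e^2 + (K₁ * (e * NNReal.sqrt e))
            * (e + 12 * (NNReal.sqrt (A * K₁) * NNReal.sqrt e))) := by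
          have hsq : NNReal.sqrt (A * (K₁ * (e * NNReal.sqrt e)))
              ≤ NNReal.sqrt (A * K₁) * NNReal.sqrt e := by
            rw [← mul_assoc, NNReal.sqrt_mul]
            exact mul_le_mul_right hsqe_mul _
          exact mul_le_mul_right
            (add_le_add_right
              (mul_le_mul_right (add_le_add_right (mul_le_mul_right hsq 12) e) _) _) K
      _ = K * (e^2 + K₁ * (e * e) * NNReal.sqrt e
            + 12 * K₁ * NNReal.sqrt (A*K₁) * (e * (NNReal.sqrt e * NNReal.sqrt e))) := by ring
      _ = K * (e^2 + K₁ * (e * e) * NNReal.sqrt e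
            + 12 * K₁ * NNReal.sqrt (A*K₁) * (e * e)) := by rw [NNReal.mul_self_sqrt]
      _ ≤ K * (e^2 + K₁ * (e * e) * 1
            + 12 * K₁ * NNReal.sqrt (A*K₁) * (e * e)) := by
          gcongr
      _ = (K * (1 + K₁ + 12 * K₁ * NNReal.sqrt (A*K₁))) * e^2 := by ring
  have hB2e : K₂ * e^2 ≤ e := by
    have hK₂e : K₂ * e ≤ 1 := by
      calc K₂ * e ≤ K₂ * (K₂+1)⁻¹ := mul_le_mul_right (le_trans heε₀ hε₀'K₂) K₂
        _ ≤ (K₂+1) * (K₂+1)⁻¹ := mul_le_mul_left (le_add_right le_rfl) _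
        _ = 1 := mul_inv_cancel₀ (by positivity)
    calc K₂ * e^2 = (K₂ * e) * e := by ring
      _ ≤ 1 * e := mul_le_mul_left hK₂e e
      _ = e := one_mul e
  -- Round 3
  have round3 : ‖P q‖₊ ≤ D' * e^3 := by
    have h := roundlem (K₂ * e^2) hB2e round2 3 (by norm_num) q (by exact_mod_cast hq3)
    refine le_trans h ?_
    rw [hD']
    have hsq3 : NNReal.sqrt (A * (K₂ * e^2)) = NNReal.sqrt (A * K₂) * e := by
      rw [← mul_assoc, NNReal.sqrt_mul, NNReal.sqrt_sq]
    rw [hsq3]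
    calc K * (e^3 + (K₂ * e^2) * (e + 12 * (NNReal.sqrt (A * K₂) * e)))
        = (K * (1 + K₂ + 12 * K₂ * NNReal.sqrt (A*K₂))) * e^3 := by ring
      _ ≤ _ := le_rfl
  -- conclude in ℝ
  have hfinal : ‖P q‖ ≤ ((D' : ℝ)) * ‖P 1‖^3 := by
    rw [← NNReal.coe_le_coe] at round3
    push_cast at round3
    simpa [hce] using round3
  calc ‖P q‖ ≤ ((D' : ℝ)) * ‖P 1‖^3 := hfinal
    _ ≤ ((D' : ℝ) + 1) * ‖P 1‖^3 := by
        apply mul_le_mul_of_nonneg_right (by linarith) (by positivity)
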